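/- Let X be a complex Banach space and T : X^k → ℂ a continuous k-linear form. Then its Aron–Berner extension T̄ : (X'')^k → ℂ is slightly continuous: for every j, if ξ₁,…,ξ_{j−1} ∈ X and ξ_{j+1},…,ξ_k ∈ X'' are fixed, then T̄(ξ₁,…,ξ_j,…,ξ_k) depends weak-star continuously on ξ_j ∈ X''. -/

import Mathlib

open NormedSpace

variable {X : Type*} [NormedAddCommGroup X] [NormedSpace ℂ X]

/-- The Aron–Berner extension of a continuous `k`-linear form `T` on `X`, evaluated at a
`k`-tuple of elements of the bidual `X''`.  It is defined recursively: for `k = 0` it is the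
constant; for `k+1` one applies the last bidual argument to the linear form
`T(x₁,…,x_k,·) ∈ X'` (this is the second transpose construction) and extends the resulting
`k`-linear form. -/
noncomputable def abExt : (k : ℕ) →
    ContinuousMultilinearMap ℂ (fun _ : Fin k => X) ℂ →
    (Fin k → StrongDual ℂ (StrongDual ℂ X)) → ℂ
  | 0, T, _ => T Fin.elim0
  | (k + 1), T, ξ =>
      abExt k
        ((ξ (Fin.last k)).compContinuousMultilinearMap
          (continuousMultilinearCurryRightEquiv' ℂ k X ℂ T))
        (fun i => ξ i.castSucc)

/-- The Aron–Berner extension extends `T` on canonical images of points of `X`. -/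
lemma abExt_inclusion : ∀ (k : ℕ)
    (T : ContinuousMultilinearMap ℂ (fun _ : Fin k => X) ℂ) (x : Fin k → X),
    abExt k T (fun i => inclusionInDoubleDual ℂ X (x i)) = T x
  | 0, T, x => by
      simp only [abExt]
      congr 1
      exact Subsingleton.elim _ _
  | (k + 1), T, x => by
      simp only [abExt]
      rw [abExt_inclusion k _ (fun i => x i.castSucc)]
      simp only [ContinuousLinearMap.compContinuousMultilinearMap_coe, Function.comp_apply,
        dual_def, continuousMultilinearCurryRightEquiv_apply']
      congr 1
      exact Fin.snoc_init_self x

/-- The Aron–Berner extension `T̄ : (X'')^k → ℂ` of a continuous `k`-linear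
form `T : X^k → ℂ` is slightly continuous: for every `j`, if `ξ₁,…,ξ_{j−1} ∈ X` (i.e. are
canonical images of elements of `X`) and `ξ_{j+1},…,ξ_k ∈ X''` are fixed, then
`T̄(ξ₁,…,ξ_j,…,ξ_k)` depends weak-star continuously on `ξ_j ∈ X''`. -/
theorem stmt_4 {k : ℕ}
    (T : ContinuousMultilinearMap ℂ (fun _ : Fin k => X) ℂ)
    (j : Fin k) (ξ : Fin k → StrongDual ℂ (StrongDual ℂ X))
    (hbefore : ∀ i : Fin k, i < j → ∃ x : X, ξ i = inclusionInDoubleDual ℂ X x) :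
    Continuous fun ζ : WeakDual ℂ (StrongDual ℂ X) =>
      abExt k T (Function.update ξ j (WeakDual.toStrongDual ζ)) := by
  induction k with
  | zero => exact j.elim0
  | succ k ih =>
    rcases eq_or_ne j (Fin.last k) with rfl | hj
    · -- last coordinate: all previous are in X, so this is evaluation of ζ at a fixed
      -- element of the dual.
      choose x hx using fun i => hbefore i.castSucc (Fin.castSucc_lt_last i)
      have key : ∀ ζ : WeakDual ℂ (StrongDual ℂ X),
          abExt (k + 1) T (Function.update ξ (Fin.last k) (WeakDual.toStrongDual ζ)) =
          ζ ((continuousMultilinearCurryRightEquiv' ℂ k X ℂ T) x) := by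
        intro ζ
        simp only [abExt, Function.update_self]
        have h2 : (fun i : Fin k =>
            Function.update ξ (Fin.last k) (WeakDual.toStrongDual ζ) i.castSucc) =
            fun i => inclusionInDoubleDual ℂ X (x i) := by
          funext i
          rw [Function.update_of_ne (Fin.castSucc_lt_last i).ne, hx i]
        rw [h2, abExt_inclusion]
        rfl
      simp only [key]
      exact WeakDual.eval_continuous _
    · -- j is not the last coordinate: induct.
      obtain ⟨j', rfl⟩ := Fin.exists_castSucc_eq.2 hj
      have key : ∀ ζ : WeakDual ℂ (StrongDual ℂ X),
          abExt (k + 1) T (Function.update ξ j'.castSucc (WeakDual.toStrongDual ζ)) =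
          abExt k
            ((ξ (Fin.last k)).compContinuousMultilinearMap
              (continuousMultilinearCurryRightEquiv' ℂ k X ℂ T))
            (Function.update (fun i : Fin k => ξ i.castSucc) j'
              (WeakDual.toStrongDual ζ)) := by
        intro ζ
        simp only [abExt]
        have hlast : Function.update ξ j'.castSucc (WeakDual.toStrongDual ζ) (Fin.last k) =
            ξ (Fin.last k) :=
          Function.update_of_ne (Fin.castSucc_lt_last j').ne' _ _
        have hcomp : (fun i : Fin k =>
            Function.update ξ j'.castSucc (WeakDual.toStrongDual ζ) i.castSucc) =
            Function.update (fun i : Fin k => ξ i.castSucc) j'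
              (WeakDual.toStrongDual ζ) := by
          funext i
          rcases eq_or_ne i j' with rfl | hi
          · simp
          · rw [Function.update_of_ne (fun h => hi (Fin.castSucc_injective k h)),
              Function.update_of_ne hi]
        rw [hlast, hcomp]
      simp only [key]
      exact ih _ j' _ (fun i hi => hbefore i.castSucc (by simpa using hi))
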